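/- For every real φ with 0 < φ < π/2 and every integer r ≥ 1, ∫_0^{2π} sin(r k) · sin k · (sin φ)/(1 + cos φ · cos k) dk = 2π · (sin φ/(1 + sin φ)) · z^{r−1}, where z := −(1 − sin φ)/cos φ (which satisfies |z| < 1). -/

import Mathlib

open scoped Real
open intervalIntegral

lemma xy_int_cos (j : ℤ) (hj : j ≠ 0) :
    ∫ x in (0:ℝ)..(2*π), Real.cos ((j:ℝ) * x) = 0 := by
  have hj' : (j:ℝ) ≠ 0 := Int.cast_ne_zero.mpr hj
  rw [intervalIntegral.integral_comp_mul_left (fun x => Real.cos x) hj']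
  simp only [mul_zero, integral_cos, Real.sin_zero, sub_zero, smul_eq_mul]
  have : (j:ℝ) * (2*π) = (2*j : ℤ) * π := by push_cast; ring
  rw [this, Real.sin_int_mul_pi, mul_zero]

lemma xy_orth (m n : ℕ) (hm : 1 ≤ m) (hn : 1 ≤ n) :
    ∫ x in (0:ℝ)..(2*π), Real.sin ((m:ℝ)*x) * Real.sin ((n:ℝ)*x)
      = if m = n then π else 0 := by
  have heq : ∀ x : ℝ, Real.sin ((m:ℝ)*x) * Real.sin ((n:ℝ)*x)
      = (Real.cos ((((m:ℤ)-(n:ℤ)):ℝ) * x) - Real.cos ((((m:ℤ)+(n:ℤ)):ℝ) * x)) / 2 := by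
    intro x
    have := Real.cos_sub_cos ((((m:ℤ)-(n:ℤ)):ℝ) * x) ((((m:ℤ)+(n:ℤ)):ℝ) * x)
    have h1 : ((((m:ℤ)-(n:ℤ)):ℝ) * x + (((m:ℤ)+(n:ℤ)):ℝ) * x) / 2 = (m:ℝ) * x := by
      push_cast; ring
    have h2 : ((((m:ℤ)-(n:ℤ)):ℝ) * x - (((m:ℤ)+(n:ℤ)):ℝ) * x) / 2 = -((n:ℝ) * x) := by
      push_cast; ring
    rw [h1, h2, Real.sin_neg] at this
    linarith [this]
  simp only [heq]
  rw [intervalIntegral.integral_div]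
  have hint1 : IntervalIntegrable (fun x => Real.cos ((((m:ℤ)-(n:ℤ)):ℝ) * x)) MeasureTheory.volume 0 (2*π) :=
    (Real.continuous_cos.comp (continuous_const.mul continuous_id)).intervalIntegrable _ _
  have hint2 : IntervalIntegrable (fun x => Real.cos ((((m:ℤ)+(n:ℤ)):ℝ) * x)) MeasureTheory.volume 0 (2*π) :=
    (Real.continuous_cos.comp (continuous_const.mul continuous_id)).intervalIntegrable _ _
  have hc1 := xy_int_cos ((m:ℤ)+(n:ℤ)) (by omega)
  push_cast at hc1
  rw [intervalIntegral.integral_sub hint1 hint2]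
  push_cast
  rw [hc1]
  by_cases h : m = n
  · subst h
    simp only [sub_self, zero_mul, Real.cos_zero, if_pos rfl]
    rw [intervalIntegral.integral_const]
    simp
  · have hc2 := xy_int_cos ((m:ℤ)-(n:ℤ)) (by omega)
    push_cast at hc2
    rw [hc2, if_neg h]
    ring

lemma xy_tele (z k : ℝ) (N : ℕ) :
    Real.sin k = (1 - 2*z*Real.cos k + z^2) *
        (∑ n ∈ Finset.range N, z^n * Real.sin (((n:ℝ)+1)*k))
      + z^N * (Real.sin (((N:ℝ)+1)*k) - z * Real.sin ((N:ℝ)*k)) := by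
  induction N with
  | zero => simp
  | succ N ih =>
    rw [Finset.sum_range_succ]
    have h1 : Real.sin ((((N:ℕ):ℝ)+1+1)*k)
        = Real.sin (((N:ℝ)+1)*k) * Real.cos k + Real.cos (((N:ℝ)+1)*k) * Real.sin k := by
      rw [show (((N:ℕ):ℝ)+1+1)*k = ((N:ℝ)+1)*k + k by ring, Real.sin_add]
    have h2 : Real.sin ((N:ℝ)*k)
        = Real.sin (((N:ℝ)+1)*k) * Real.cos k - Real.cos (((N:ℝ)+1)*k) * Real.sin k := by
      rw [show (N:ℝ)*k = ((N:ℝ)+1)*k - k by ring, Real.sin_sub]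
    push_cast
    rw [h2] at ih
    rw [h1]
    linear_combination ih

lemma xy_step (A X u Y : ℝ) (hY : Y ≠ 0) (hu : 1 + u ≠ 0) :
    A * X * u / ((1 + u) / 2 * Y) = (2 * u / (1 + u)) * (A * (X / Y)) := by
  field_simp

set_option maxHeartbeats 1000000 in
theorem integral_xy_chain_covariance
    (φ : ℝ) (hφ0 : 0 < φ) (hφ1 : φ < π / 2) (r : ℕ) (hr : 1 ≤ r) :
    ∫ k in (0 : ℝ)..(2 * π),
        Real.sin (r * k) * Real.sin k * Real.sin φ / (1 + Real.cos φ * Real.cos k) =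
      2 * π * (Real.sin φ / (1 + Real.sin φ)) *
        (-(1 - Real.sin φ) / Real.cos φ) ^ (r - 1) := by
  have hπ := Real.pi_pos
  have hs0 : 0 < Real.sin φ := Real.sin_pos_of_pos_of_lt_pi hφ0 (by linarith)
  have ha0 : 0 < Real.cos φ := Real.cos_pos_of_mem_Ioo ⟨by linarith, hφ1⟩
  have hpyth : Real.sin φ ^ 2 + Real.cos φ ^ 2 = 1 := Real.sin_sq_add_cos_sq φ
  set s := Real.sin φ with hsdef
  set a := Real.cos φ with hadef
  have hs1 : s < 1 := by nlinarith
  set z : ℝ := -(1 - s) / a with hzdef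
  have habs : |z| = (1 - s) / a := by
    rw [hzdef, abs_div, abs_of_pos ha0, abs_of_nonpos (by linarith : -(1-s) ≤ 0)]
    ring_nf
  have hz1 : |z| < 1 := by
    rw [habs, div_lt_one ha0]; nlinarith
  have hz0 : 0 ≤ |z| := abs_nonneg z
  set D : ℝ → ℝ := fun k => 1 - 2 * z * Real.cos k + z ^ 2 with hDdef
  have hDlb : ∀ k, (1 - |z|) ^ 2 ≤ D k := by
    intro k
    have h1 : |z * Real.cos k| ≤ |z| := by
      rw [abs_mul]
      nlinarith [Real.abs_cos_le_one k]
    obtain ⟨h2, h3⟩ := abs_le.mp h1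
    simp only [hDdef]
    nlinarith [sq_abs z]
  have hDpos : ∀ k, 0 < D k := fun k =>
    lt_of_lt_of_le (by nlinarith) (hDlb k)
  have hkey : ∀ k, 1 + a * Real.cos k = (1 + s) / 2 * D k := by
    intro k
    simp only [hDdef, hzdef]
    field_simp
    linear_combination ((1-s) + 2*a*Real.cos k) * hpyth
  have hDc : Continuous D :=
    (continuous_const.sub ((continuous_const.mul Real.continuous_cos))).add continuous_const
  set g : ℕ → ℝ → ℝ := fun N k =>
    Real.sin ((r:ℝ)*k) * (Real.sin (((N:ℝ)+1)*k) - z * Real.sin ((N:ℝ)*k)) / D k with hgdef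
  have hgc : ∀ N, Continuous (g N) := by
    intro N
    apply Continuous.div _ hDc (fun k => (hDpos k).ne')
    exact (Real.continuous_sin.comp (continuous_const.mul continuous_id)).mul
      ((Real.continuous_sin.comp (continuous_const.mul continuous_id)).sub
        (continuous_const.mul (Real.continuous_sin.comp (continuous_const.mul continuous_id))))
  have hs1' : (1:ℝ) + s ≠ 0 := by linarith
  have hsplit : ∀ (N : ℕ) (k : ℝ),
      Real.sin ((r:ℝ)*k) * Real.sin k * s / (1 + a * Real.cos k)
        = (2*s/(1+s)) * ((∑ n ∈ Finset.range N, z^n * (Real.sin ((r:ℝ)*k) * Real.sin (((n:ℝ)+1)*k)))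
            + z^N * g N k) := by
    intro N k
    have ht := xy_tele z k N
    have hD := (hDpos k).ne'
    have hfrac : Real.sin k / D k
        = (∑ n ∈ Finset.range N, z^n * Real.sin (((n:ℝ)+1)*k))
          + z^N * ((Real.sin (((N:ℝ)+1)*k) - z * Real.sin ((N:ℝ)*k)) / D k) := by
      rw [ht, show (1 - 2*z*Real.cos k + z^2) = D k from rfl, add_div,
        mul_div_cancel_left₀ _ hD, mul_div_assoc]
    rw [hkey k, xy_step _ _ _ _ hD hs1', hfrac]
    simp only [hgdef]
    congr 1
    rw [mul_add]
    congr 1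
    · rw [Finset.mul_sum]
      apply Finset.sum_congr rfl
      intro n _
      ring
    · ring
  have hsin : ∀ c : ℝ, Continuous (fun k : ℝ => Real.sin (c*k)) :=
    fun c => Real.continuous_sin.comp (continuous_const.mul continuous_id)
  have horth : ∀ n : ℕ,
      (∫ k in (0:ℝ)..(2*π), Real.sin ((r:ℝ)*k) * Real.sin (((n:ℝ)+1)*k))
        = if r = n+1 then π else 0 := by
    intro n
    have h := xy_orth r (n+1) hr (by omega)
    push_cast at h
    exact h
  have hI : ∀ N : ℕ,
      (∫ k in (0:ℝ)..(2*π), Real.sin ((r:ℝ)*k) * Real.sin k * s / (1 + a*Real.cos k))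
        = (2*s/(1+s)) * ((∑ n ∈ Finset.range N, z^n * (if r = n+1 then π else 0))
            + z^N * ∫ k in (0:ℝ)..(2*π), g N k) := by
    intro N
    have h1 : (∫ k in (0:ℝ)..(2*π), Real.sin ((r:ℝ)*k) * Real.sin k * s / (1 + a*Real.cos k))
        = ∫ k in (0:ℝ)..(2*π),
            (2*s/(1+s)) * ((∑ n ∈ Finset.range N,
                z^n * (Real.sin ((r:ℝ)*k) * Real.sin (((n:ℝ)+1)*k))) + z^N * g N k) :=
      intervalIntegral.integral_congr (fun k _ => hsplit N k)
    rw [h1, intervalIntegral.integral_const_mul]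
    congr 1
    have hintsum : IntervalIntegrable
        (fun k => ∑ n ∈ Finset.range N, z^n * (Real.sin ((r:ℝ)*k) * Real.sin (((n:ℝ)+1)*k)))
        MeasureTheory.volume 0 (2*π) := by
      apply Continuous.intervalIntegrable
      exact continuous_finset_sum _ (fun i _ =>
        continuous_const.mul ((hsin r).mul (hsin ((i:ℝ)+1))))
    have hintg : IntervalIntegrable (fun k => z^N * g N k) MeasureTheory.volume 0 (2*π) :=
      (continuous_const.mul (hgc N)).intervalIntegrable _ _
    rw [intervalIntegral.integral_add hintsum hintg,
      intervalIntegral.integral_finset_sum (fun i _ => by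
        apply Continuous.intervalIntegrable
        exact continuous_const.mul ((hsin r).mul (hsin ((i:ℝ)+1)))),
      intervalIntegral.integral_const_mul]
    congr 1
    apply Finset.sum_congr rfl
    intro n _
    rw [intervalIntegral.integral_const_mul, horth n]
  have hsum : ∀ N : ℕ, r ≤ N →
      (∑ n ∈ Finset.range N, z^n * (if r = n+1 then π else 0)) = z^(r-1) * π := by
    intro N hN
    rw [Finset.sum_eq_single (r-1)]
    · rw [if_pos (by omega)]
    · intro b _ hb
      rw [if_neg (by omega), mul_zero]
    · intro h
      exact absurd (Finset.mem_range.mpr (by omega)) h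
  set C : ℝ := 2/(1-|z|)^2 with hCdef
  have hgb : ∀ N : ℕ, |∫ k in (0:ℝ)..(2*π), g N k| ≤ C * (2*π) := by
    intro N
    have hb := intervalIntegral.norm_integral_le_of_norm_le_const
      (C := C) (f := g N) (a := (0:ℝ)) (b := 2*π) ?_
    · rw [Real.norm_eq_abs] at hb
      calc |∫ k in (0:ℝ)..(2*π), g N k| ≤ C * |2*π - 0| := hb
        _ = C * (2*π) := by rw [sub_zero, abs_of_pos (by linarith)]
    · intro x _
      rw [Real.norm_eq_abs, hgdef]
      simp only
      rw [abs_div, abs_of_pos (hDpos x)]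
      have h1 : |Real.sin ((r:ℝ)*x) * (Real.sin (((N:ℝ)+1)*x) - z * Real.sin ((N:ℝ)*x))| ≤ 2 := by
        rw [abs_mul]
        have h2 : |Real.sin (((N:ℝ)+1)*x) - z * Real.sin ((N:ℝ)*x)| ≤ 2 := by
          have := abs_sub_abs_le_abs_sub (Real.sin (((N:ℝ)+1)*x)) (z * Real.sin ((N:ℝ)*x))
          have h3 := Real.abs_sin_le_one (((N:ℝ)+1)*x)
          have h4 := Real.abs_sin_le_one ((N:ℝ)*x)
          have h5 : |z * Real.sin ((N:ℝ)*x)| ≤ 1 := by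
            rw [abs_mul]; nlinarith
          calc |Real.sin (((N:ℝ)+1)*x) - z * Real.sin ((N:ℝ)*x)|
              ≤ |Real.sin (((N:ℝ)+1)*x)| + |z * Real.sin ((N:ℝ)*x)| := abs_sub _ _
            _ ≤ 2 := by linarith
        nlinarith [Real.abs_sin_le_one ((r:ℝ)*x), abs_nonneg (Real.sin (((N:ℝ)+1)*x) - z * Real.sin ((N:ℝ)*x))]
      rw [hCdef]
      have hd1 : (0:ℝ) < (1-|z|)^2 := pow_pos (by linarith) 2
      exact div_le_div₀ (by norm_num) h1 hd1 (hDlb x)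
  set I := ∫ k in (0:ℝ)..(2*π), Real.sin ((r:ℝ)*k) * Real.sin k * s / (1 + a*Real.cos k) with hIdef
  set c1 : ℝ := 2 * π * (s / (1 + s)) * z ^ (r - 1) with hc1def
  have hK0 : (0:ℝ) ≤ (2*s/(1+s)) * (C*(2*π)) := by positivity
  have hd : ∀ N : ℕ, r ≤ N → |I - c1| ≤ ((2*s/(1+s)) * (C*(2*π))) * |z|^N := by
    intro N hN
    have h2 := hI N
    rw [hsum N hN] at h2
    have h3 : I - c1 = (2*s/(1+s)) * (z^N * ∫ k in (0:ℝ)..(2*π), g N k) := by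
      rw [h2, hc1def]; ring
    rw [h3, abs_mul, abs_mul, abs_of_pos (show (0:ℝ) < 2*s/(1+s) by positivity), abs_pow]
    calc (2*s/(1+s)) * (|z|^N * |∫ k in (0:ℝ)..(2*π), g N k|)
        ≤ (2*s/(1+s)) * (|z|^N * (C*(2*π))) := by
          apply mul_le_mul_of_nonneg_left
            (mul_le_mul_of_nonneg_left (hgb N) (pow_nonneg hz0 N)) (by positivity)
      _ = ((2*s/(1+s)) * (C*(2*π))) * |z|^N := by ring
  have hlim : Filter.Tendsto (fun N : ℕ => ((2*s/(1+s)) * (C*(2*π))) * |z|^N)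
      Filter.atTop (nhds 0) := by
    have := (tendsto_pow_atTop_nhds_zero_of_lt_one hz0 hz1).const_mul ((2*s/(1+s)) * (C*(2*π)))
    simpa using this
  have hle : |I - c1| ≤ 0 := ge_of_tendsto hlim (Filter.eventually_atTop.mpr ⟨r, hd⟩)
  have hfin : I = c1 := by
    have := abs_nonneg (I - c1)
    have h0 : |I - c1| = 0 := le_antisymm hle this
    have := abs_eq_zero.mp h0
    linarith [this]
  exact hfin
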